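/- Let g_t be a flow on M with d(g_t x, g_t y) → 0 exponentially for y ∈ W^s(x) and τ positive Lipschitz. Define β^s(x,y) = ∫₀^∞(τ(g_r x) − τ(g_r y)) dr and the time-changed flow g^τ. If y ∈ W^s(x), then d(g^τ_t(x), g^τ_{t − β^s(x,y)}(y)) → 0 as t → +∞. Consequently, the point g^τ_{−β^s(x,y)}(y) satisfies d(g^τ_t x, g^τ_t(g^τ_{−β^s(x,y)} y)) → 0 as t → +∞. -/

import Mathlib

open MeasureTheory Filter

/-- If `y ∈ W^s(x)` (exponential contraction of forward orbits),
then along the time-changed flow `g^τ_t(z) = g_{α(z,t)}(z)` we have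
`d(g^τ_t x, g^τ_{t − β^s(x,y)} y) → 0` as `t → +∞`, and consequently the point
`g^τ_{−β^s(x,y)}(y)` satisfies `d(g^τ_t x, g^τ_t (g^τ_{−β^s(x,y)} y)) → 0`.
Here `β^s(x,y) = ∫₀^∞ (τ(g_r x) − τ(g_r y)) dr`. -/
theorem stmt_6 {M : Type*} [MetricSpace M] [CompactSpace M]
    (g : ℝ → M → M)
    (hg : Continuous fun p : ℝ × M => g p.1 p.2)
    (hg0 : ∀ z, g 0 z = z)
    (hgadd : ∀ t s z, g (t + s) z = g t (g s z))
    (τ : M → ℝ) (L : NNReal) (hτ : LipschitzWith L τ)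
    (τmin τmax : ℝ) (hτmin : 0 < τmin)
    (hτbd : ∀ z, τmin ≤ τ z ∧ τ z ≤ τmax)
    (α : M → ℝ → ℝ)
    (hα : ∀ z t, (∫ r in (0:ℝ)..(α z t), τ (g r z)) = t)
    (hα' : ∀ z t, α z (∫ r in (0:ℝ)..t, τ (g r z)) = t)
    (C₀ B : ℝ) (hC₀ : 0 < C₀) (hB : 0 < B)
    (x y : M)
    (hcontr : ∀ t ≥ (0:ℝ), dist (g t x) (g t y) ≤ C₀ * Real.exp (-B * t)) :
    Tendsto
      (fun t => dist (g (α x t) x)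
        (g (α y (t - ∫ r in Set.Ioi (0:ℝ), (τ (g r x) - τ (g r y)))) y))
      atTop (nhds 0) ∧
    Tendsto
      (fun t => dist (g (α x t) x)
        (g (α (g (α y (-(∫ r in Set.Ioi (0:ℝ), (τ (g r x) - τ (g r y))))) y) t)
           (g (α y (-(∫ r in Set.Ioi (0:ℝ), (τ (g r x) - τ (g r y))))) y)))
      atTop (nhds 0) := by
  have hτc : Continuous τ := hτ.continuous
  have hgz : ∀ z : M, Continuous fun r : ℝ => g r z := fun z =>
    hg.comp (continuous_id.prodMk continuous_const)
  have hcz : ∀ z : M, Continuous fun r : ℝ => τ (g r z) := fun z => hτc.comp (hgz z)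
  have hint : ∀ (z : M) (a b : ℝ),
      IntervalIntegrable (fun r => τ (g r z)) volume a b :=
    fun z a b => (hcz z).intervalIntegrable a b
  have hτmax : 0 < τmax := lt_of_lt_of_le hτmin ((hτbd x).1.trans (hτbd x).2)
  have hα0 : ∀ z, α z 0 = 0 := by
    intro z
    have := hα' z 0
    simpa using this
  -- key two-sided estimates on increments of α
  have key : ∀ (z : M) (u v : ℝ), α z u ≤ α z v →
      τmin * (α z v - α z u) ≤ v - u ∧ v - u ≤ τmax * (α z v - α z u) := by
    intro z u v hle
    have hsub : v - u = ∫ r in (α z u)..(α z v), τ (g r z) := by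
      have := intervalIntegral.integral_interval_sub_left (hint z 0 (α z v)) (hint z 0 (α z u))
      rw [hα z v, hα z u] at this
      exact this
    constructor
    · have hmono : (∫ r in (α z u)..(α z v), (fun _ : ℝ => τmin) r)
          ≤ ∫ r in (α z u)..(α z v), τ (g r z) :=
        intervalIntegral.integral_mono_on hle intervalIntegrable_const (hint z _ _)
          (fun r _ => (hτbd (g r z)).1)
      rw [intervalIntegral.integral_const, smul_eq_mul] at hmono
      rw [hsub]; nlinarith [hmono]
    · have hmono : (∫ r in (α z u)..(α z v), τ (g r z))
          ≤ ∫ r in (α z u)..(α z v), (fun _ : ℝ => τmax) r :=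
        intervalIntegral.integral_mono_on hle (hint z _ _) intervalIntegrable_const
          (fun r _ => (hτbd (g r z)).2)
      rw [intervalIntegral.integral_const, smul_eq_mul] at hmono
      rw [hsub]; nlinarith [hmono]
  -- Lipschitz-type bound for α
  have lip : ∀ (z : M) (u v : ℝ), τmin * |α z u - α z v| ≤ |u - v| := by
    intro z u v
    rcases le_total (α z u) (α z v) with h | h
    · have h1 := (key z u v h).1
      have h2 : (0:ℝ) ≤ v - u :=
        le_trans (mul_nonneg hτmin.le (sub_nonneg.2 h)) h1
      rw [abs_sub_comm, abs_of_nonneg (sub_nonneg.2 h), abs_sub_comm, abs_of_nonneg h2]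
      exact h1
    · have h1 := (key z v u h).1
      have h2 : (0:ℝ) ≤ u - v :=
        le_trans (mul_nonneg hτmin.le (sub_nonneg.2 h)) h1
      rw [abs_of_nonneg (sub_nonneg.2 h), abs_of_nonneg h2]
      exact h1
  -- lower bound on α x t
  have αlow : ∀ t : ℝ, 0 ≤ t → t / τmax ≤ α x t := by
    intro t ht
    rcases le_or_gt (α x 0) (α x t) with h | h
    · have h1 := (key x 0 t h).2
      rw [hα0 x] at h1
      rw [div_le_iff₀ hτmax]
      nlinarith
    · exfalso
      have h' : α x t < 0 := by rwa [hα0 x] at h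
      have h1 := (key x t 0 h.le).1
      rw [hα0 x] at h1
      have h2 := mul_pos hτmin (show (0:ℝ) < 0 - α x t by linarith)
      linarith
  have salim : Tendsto (fun t => α x t) atTop atTop := by
    refine tendsto_atTop_mono' atTop ?_ (tendsto_id.atTop_div_const hτmax)
    filter_upwards [eventually_ge_atTop (0:ℝ)] with t ht
    exact αlow t ht
  set β : ℝ := ∫ r in Set.Ioi (0:ℝ), (τ (g r x) - τ (g r y)) with hβdef
  -- integrability of the difference on (0,∞)
  have hIntg : IntegrableOn (fun r => τ (g r x) - τ (g r y)) (Set.Ioi (0:ℝ)) volume := by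
    refine Integrable.mono' (((exp_neg_integrableOn_Ioi 0 hB).const_mul ((L:ℝ) * C₀)))
      (((hcz x).sub (hcz y)).aestronglyMeasurable) ?_
    filter_upwards [ae_restrict_mem measurableSet_Ioi] with r hr
    have h1 := hτ.dist_le_mul (g r x) (g r y)
    have h2 := hcontr r (le_of_lt hr)
    rw [Real.norm_eq_abs, ← Real.dist_eq]
    calc dist (τ (g r x)) (τ (g r y)) ≤ (L:ℝ) * dist (g r x) (g r y) := h1
      _ ≤ (L:ℝ) * (C₀ * Real.exp (-B * r)) := by
          exact mul_le_mul_of_nonneg_left h2 L.coe_nonneg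
      _ = (L:ℝ) * C₀ * Real.exp (-B * r) := by ring
  have htail : Tendsto (fun s : ℝ =>
      (∫ r in (0:ℝ)..s, (τ (g r x) - τ (g r y))) - β) atTop (nhds 0) := by
    have h := intervalIntegral_tendsto_integral_Ioi 0 hIntg tendsto_id
    have h2 := h.sub (tendsto_const_nhds (x := β))
    simpa [hβdef] using h2
  -- splitting the interval integral of the difference
  have hsplit : ∀ s : ℝ, (∫ r in (0:ℝ)..s, (τ (g r x) - τ (g r y)))
      = (∫ r in (0:ℝ)..s, τ (g r x)) - ∫ r in (0:ℝ)..s, τ (g r y) :=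
    fun s => intervalIntegral.integral_sub (hint x 0 s) (hint y 0 s)
  set e : ℝ → ℝ := fun t => (∫ r in (0:ℝ)..(α x t), (τ (g r x) - τ (g r y))) - β with hedef
  have keyid : ∀ t : ℝ, (t - β) - (∫ r in (0:ℝ)..(α x t), τ (g r y)) = e t := by
    intro t
    have h1 := hsplit (α x t)
    have h2 := hα x t
    simp only [hedef]
    rw [h1, h2]
    ring
  -- the time shift tends to 0
  have hδbd : ∀ t : ℝ, τmin * |α y (t - β) - α x t| ≤ |e t| := by
    intro t
    have h1 := lip y (t - β) (∫ r in (0:ℝ)..(α x t), τ (g r y))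
    rw [hα' y (α x t)] at h1
    rwa [keyid t] at h1
  have hδ0 : Tendsto (fun t => α y (t - β) - α x t) atTop (nhds 0) := by
    have hecomp : Tendsto e atTop (nhds 0) := htail.comp salim
    have hb : ∀ t : ℝ, ‖α y (t - β) - α x t‖ ≤ |e t| / τmin := by
      intro t
      rw [Real.norm_eq_abs, le_div_iff₀ hτmin]
      calc |α y (t - β) - α x t| * τmin = τmin * |α y (t - β) - α x t| := by ring
        _ ≤ |e t| := hδbd t
    refine squeeze_zero_norm hb ?_
    have := (hecomp.abs).div_const τmin
    simpa using this
  -- main limit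
  have main : Tendsto (fun t => dist (g (α x t) x) (g (α y (t - β)) y)) atTop (nhds 0) := by
    rw [Metric.tendsto_nhds]
    intro ε hε
    -- uniform continuity of the flow near time 0
    obtain ⟨δ₀, hδ₀pos, hδ₀⟩ : ∃ δ₀ > 0, ∀ (d : ℝ) (z : M), |d| < δ₀ → dist (g d z) z < ε/2 := by
      have hΦ : Continuous fun p : ℝ × M => dist (g p.1 p.2) p.2 :=
        hg.dist continuous_snd
      have hopen : IsOpen ((fun p : ℝ × M => dist (g p.1 p.2) p.2) ⁻¹' Set.Iio (ε/2)) :=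
        isOpen_Iio.preimage hΦ
      have hsubset : ({(0:ℝ)} ×ˢ (Set.univ : Set M)) ⊆
          (fun p : ℝ × M => dist (g p.1 p.2) p.2) ⁻¹' Set.Iio (ε/2) := by
        rintro ⟨d, z⟩ ⟨hd, -⟩
        simp only [Set.mem_singleton_iff] at hd
        simp only [Set.mem_preimage, Set.mem_Iio, hd, hg0, dist_self]
        positivity
      obtain ⟨u, v, hu, hv, h0u, hvv, huv⟩ :=
        generalized_tube_lemma isCompact_singleton isCompact_univ hopen hsubset
      obtain ⟨δ₀, hδ₀pos, hball⟩ := Metric.isOpen_iff.1 hu 0 (h0u rfl)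
      refine ⟨δ₀, hδ₀pos, fun d z hd => ?_⟩
      have hdu : d ∈ u := hball (by simpa [Real.dist_eq] using hd)
      have : (d, z) ∈ u ×ˢ v := ⟨hdu, hvv (Set.mem_univ z)⟩
      exact huv this
    -- eventually bounds
    have hexp : Tendsto (fun t => C₀ * Real.exp (-B * α x t)) atTop (nhds 0) := by
      have h1 : Tendsto (fun s : ℝ => Real.exp (-B * s)) atTop (nhds 0) := by
        have h2 : Tendsto (fun s : ℝ => B * s) atTop atTop :=
          Tendsto.const_mul_atTop hB tendsto_id
        have hfe : (fun s : ℝ => Real.exp (-B * s))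
            = (fun u : ℝ => Real.exp (-u)) ∘ (fun s : ℝ => B * s) := by
          funext s
          simp [Function.comp, neg_mul]
        rw [hfe]
        exact Real.tendsto_exp_neg_atTop_nhds_zero.comp h2
      have := (h1.comp salim).const_mul C₀
      simpa using this
    have h1 : ∀ᶠ t in atTop, C₀ * Real.exp (-B * α x t) < ε/2 :=
      hexp.eventually_lt_const (by positivity)
    have h2 : ∀ᶠ t in atTop, |α y (t - β) - α x t| < δ₀ := by
      have := hδ0.eventually (Metric.ball_mem_nhds 0 hδ₀pos)
      filter_upwards [this] with t ht
      simpa [Real.dist_eq] using ht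
    have h3 : ∀ᶠ t in atTop, 0 ≤ α x t := by
      filter_upwards [eventually_ge_atTop (0:ℝ)] with t ht
      exact le_trans (by positivity) (αlow t ht)
    filter_upwards [h1, h2, h3] with t ht1 ht2 ht3
    have hrw : α y (t - β) = (α y (t - β) - α x t) + α x t := by ring
    have hgsplit : g (α y (t - β)) y = g (α y (t - β) - α x t) (g (α x t) y) := by
      rw [← hgadd, sub_add_cancel]
    have hd1 : dist (g (α x t) x) (g (α x t) y) < ε/2 :=
      lt_of_le_of_lt (hcontr (α x t) ht3) ht1
    have hd2 : dist (g (α x t) y) (g (α y (t - β)) y) < ε/2 := by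
      rw [hgsplit, dist_comm]
      exact hδ₀ _ _ ht2
    have htri := dist_triangle (g (α x t) x) (g (α x t) y) (g (α y (t - β)) y)
    rw [Real.dist_eq, sub_zero, abs_of_nonneg dist_nonneg]
    linarith
  refine ⟨main, ?_⟩
  -- the second function is pointwise equal to the first
  have hkey2 : ∀ t : ℝ, α (g (α y (-β)) y) t = α y (t - β) - α y (-β) := by
    intro t
    set a : ℝ := α y (-β) with hadef
    have hcomp : (∫ r in (0:ℝ)..(α y (t - β) - a), τ (g r (g a y))) = t := by
      have hrwfun : (∫ r in (0:ℝ)..(α y (t - β) - a), τ (g r (g a y)))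
          = ∫ r in (0:ℝ)..(α y (t - β) - a), τ (g (r + a) y) := by
        apply intervalIntegral.integral_congr
        intro r _
        show τ (g r (g a y)) = τ (g (r + a) y)
        rw [hgadd]
      rw [hrwfun, intervalIntegral.integral_comp_add_right (fun r => τ (g r y)) a,
        zero_add, sub_add_cancel]
      have hsub := intervalIntegral.integral_interval_sub_left
        (hint y 0 (α y (t - β))) (hint y 0 a)
      rw [hα y (t - β), hadef, hα y (-β)] at hsub
      rw [← hsub]; ring
    have h := hα' (g a y) (α y (t - β) - a)
    rw [hcomp] at h
    exact h
  have heq : ∀ t : ℝ, g (α (g (α y (-β)) y) t) (g (α y (-β)) y) = g (α y (t - β)) y := by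
    intro t
    rw [hkey2 t, ← hgadd, sub_add_cancel]
  have hfun : (fun t => dist (g (α x t) x)
      (g (α (g (α y (-β)) y) t) (g (α y (-β)) y)))
      = fun t => dist (g (α x t) x) (g (α y (t - β)) y) := by
    funext t
    rw [heq t]
  rw [hfun]
  exact main
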